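/- arXiv:2301.03906 — 4 statements merged into one kernel-verified Lean document; each statement's English description precedes it below -/
import Mathlib

section
/- Let A, B, C be 3×3 complex matrices of determinant 1 with CBA = I. Then tr(A⁻¹B) − tr(A⁻¹)tr(B) = tr(C⁻¹A) − tr(C⁻¹)tr(A) and tr(A⁻¹B) − tr(A⁻¹)tr(B) = tr(B⁻¹C) − tr(B⁻¹)tr(C). -/
open Matrix

theorem shape_invariant_sigma_plus_cyclic
    (A B C : Matrix (Fin 3) (Fin 3) ℂ)
    (hA : A.det = 1) (hB : B.det = 1) (hC : C.det = 1)
    (h : C * B * A = 1) :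
    (A⁻¹ * B).trace - (A⁻¹).trace * B.trace
      = (C⁻¹ * A).trace - (C⁻¹).trace * A.trace ∧
    (A⁻¹ * B).trace - (A⁻¹).trace * B.trace
      = (B⁻¹ * C).trace - (B⁻¹).trace * C.trace := by
  have hBinv : B⁻¹ = B.adjugate := by rw [Matrix.inv_def, hB]; simp
  have hCinv : C⁻¹ = C.adjugate := by rw [Matrix.inv_def, hC]; simp
  have hAinv : A⁻¹ = C * B := Matrix.inv_eq_left_inv h
  have hAeq : A = B.adjugate * C.adjugate := by
    rw [← Matrix.inv_eq_right_inv h, Matrix.mul_inv_rev, hBinv, hCinv]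
  have hC' := hC
  rw [Matrix.det_fin_three] at hC'
  rw [hAinv, hAeq, hBinv, hCinv]
  constructor
  · simp only [Matrix.adjugate_fin_three, Matrix.trace_fin_three, Matrix.mul_apply,
      Fin.sum_univ_three, Matrix.cons_val', Matrix.cons_val_zero, Matrix.cons_val_one,
      Matrix.head_cons, Matrix.empty_val', Matrix.cons_val_fin_one, Matrix.head_fin_const,
      Matrix.cons_val_two, Matrix.tail_cons, Matrix.of_apply]
    linear_combination ((C 0 0 + C 1 1 + C 2 2) * ((B 1 1*B 2 2 - B 1 2*B 2 1) + (B 0 0*B 2 2 - B 0 2*B 2 0) + (B 0 0*B 1 1 - B 0 1*B 1 0)) - (C 0 0*(B 1 1*B 2 2 - B 1 2*B 2 1) + C 0 1*(B 1 2*B 2 0 - B 1 0*B 2 2) + C 0 2*(B 1 0*B 2 1 - B 1 1*B 2 0) + C 1 0*(B 0 2*B 2 1 - B 0 1*B 2 2) + C 1 1*(B 0 0*B 2 2 - B 0 2*B 2 0) + C 1 2*(B 0 1*B 2 0 - B 0 0*B 2 1) + C 2 0*(B 0 1*B 1 2 - B 0 2*B 1 1) + C 2 1*(B 0 2*B 1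 0 - B 0 0*B 1 2) + C 2 2*(B 0 0*B 1 1 - B 0 1*B 1 0))) * hC'
  · simp only [Matrix.adjugate_fin_three, Matrix.trace_fin_three, Matrix.mul_apply,
      Fin.sum_univ_three, Matrix.cons_val', Matrix.cons_val_zero, Matrix.cons_val_one,
      Matrix.head_cons, Matrix.empty_val', Matrix.cons_val_fin_one, Matrix.head_fin_const,
      Matrix.cons_val_two, Matrix.tail_cons, Matrix.of_apply]
    ring
end

section
/- Let A, B, C be 3×3 complex matrices of determinant 1 with CBA = I. Then tr(AB⁻¹) − tr(B⁻¹)tr(A) = tr(CA⁻¹) − tr(A⁻¹)tr(C) and tr(AB⁻¹) − tr(B⁻¹)tr(A) = tr(BC⁻¹) − tr(C⁻¹)tr(B). -/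
open Matrix

set_option maxHeartbeats 1000000 in
lemma key_adj_trace (M N : Matrix (Fin 3) (Fin 3) ℂ) :
    (N * M.adjugate).trace - (M.adjugate).trace * N.trace
      = (N * M * M).trace - M.trace * (N * M).trace := by
  rw [Matrix.adjugate_fin_three M]
  simp [Matrix.trace, Matrix.mul_apply, Fin.sum_univ_three]
  ring

theorem shape_invariant_sigma_minus_cyclic
    (A B C : Matrix (Fin 3) (Fin 3) ℂ)
    (hA : A.det = 1) (hB : B.det = 1) (hC : C.det = 1)
    (h : C * B * A = 1) :
    (A * B⁻¹).trace - (B⁻¹).trace * A.trace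
      = (C * A⁻¹).trace - (A⁻¹).trace * C.trace ∧
    (A * B⁻¹).trace - (B⁻¹).trace * A.trace
      = (B * C⁻¹).trace - (C⁻¹).trace * B.trace := by
  have hAu : IsUnit A.det := by rw [hA]; exact isUnit_one
  have h' : C * (B * A) = 1 := by rw [← mul_assoc]; exact h
  have hCinv : C⁻¹ = B * A := Matrix.inv_eq_right_inv h'
  have hC2 : C = A⁻¹ * B⁻¹ := by
    rw [(Matrix.inv_eq_left_inv h').symm, Matrix.mul_inv_rev]
  have adjA : A⁻¹ = A.adjugate := by rw [Matrix.inv_def, hA]; simp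
  have adjB : B⁻¹ = B.adjugate := by rw [Matrix.inv_def, hB]; simp
  have hL : (A * B⁻¹).trace - (B⁻¹).trace * A.trace
      = (A * B * B).trace - B.trace * (A * B).trace := by
    rw [adjB]; exact key_adj_trace B A
  have hR1 : (C * A⁻¹).trace - (A⁻¹).trace * C.trace
      = (C * A * A).trace - A.trace * (C * A).trace := by
    rw [adjA]; exact key_adj_trace A C
  have hCAA : (C * A * A).trace = (A * B⁻¹).trace := by
    rw [hC2]
    rw [show A⁻¹ * B⁻¹ * A * A = A⁻¹ * (B⁻¹ * A * A) by noncomm_ring,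
      Matrix.trace_mul_comm]
    rw [show B⁻¹ * A * A * A⁻¹ = B⁻¹ * A * (A * A⁻¹) by noncomm_ring,
      Matrix.mul_nonsing_inv A hAu, mul_one, Matrix.trace_mul_comm]
  have hCA : (C * A).trace = (B⁻¹).trace := by
    rw [hC2, show A⁻¹ * B⁻¹ * A = A⁻¹ * (B⁻¹ * A) by noncomm_ring,
      Matrix.trace_mul_comm, mul_assoc, Matrix.mul_nonsing_inv A hAu, mul_one]
  have hR2 : (B * C⁻¹).trace = (A * B * B).trace ∧ (C⁻¹).trace = (A * B).trace := by
    constructor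
    · rw [hCinv, show B * (B * A) = B * B * A by noncomm_ring,
        Matrix.trace_mul_comm (B * B) A, ← mul_assoc]
    · rw [hCinv, Matrix.trace_mul_comm]
  constructor
  · rw [hR1, hCAA, hCA]; ring
  · rw [hL, hR2.1, hR2.2]; ring
end

section
/- Let A, B, C be in SL(3,ℂ) with CBA = I. Then tr([A,B]) + tr([B,A]) = tr(A)tr(A⁻¹) + tr(B)tr(B⁻¹) + tr(C)tr(C⁻¹) + σ₊(A,B,C)·σ₋(A,B,C) − tr(A)tr(B)tr(C) − tr(A⁻¹)tr(B⁻¹)tr(C⁻¹) − 3. -/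
open Matrix

theorem trace_commutator_sum_formula
    (A B C : Matrix (Fin 3) (Fin 3) ℂ)
    (hA : A.det = 1) (hB : B.det = 1) (hC : C.det = 1)
    (h : C * B * A = 1) :
    (A * B * A⁻¹ * B⁻¹).trace + (B * A * B⁻¹ * A⁻¹).trace
      = A.trace * (A⁻¹).trace + B.trace * (B⁻¹).trace + C.trace * (C⁻¹).trace
        + ((A⁻¹ * B).trace - (A⁻¹).trace * B.trace)
          * ((B⁻¹ * A).trace - (B⁻¹).trace * A.trace)
        - A.trace * B.trace * C.trace
        - (A⁻¹).trace * (B⁻¹).trace * (C⁻¹).trace - 3 := by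
  have h' : C * (B * A) = 1 := by rw [← mul_assoc]; exact h
  have hdet : (B * A).det = 1 := by rw [det_mul, hB, hA, one_mul]
  have hCi : C⁻¹ = B * A := inv_eq_right_inv h'
  have hAinv : A⁻¹ = A.adjugate := by
    apply inv_eq_left_inv; rw [adjugate_mul, hA, one_smul]
  have hBinv : B⁻¹ = B.adjugate := by
    apply inv_eq_left_inv; rw [adjugate_mul, hB, one_smul]
  have hCval : C = (B * A).adjugate := by
    have h2 : (B * A)⁻¹ = C := inv_eq_left_inv h'
    rw [← h2]
    apply inv_eq_left_inv; rw [adjugate_mul, hdet, one_smul]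
  rw [hAinv, hBinv, hCi, hCval]
  rw [Matrix.det_fin_three] at hA hB
  simp only [Matrix.trace_fin_three, Matrix.adjugate_fin_three, Matrix.mul_apply,
    Fin.sum_univ_three, Matrix.cons_val', Matrix.cons_val_zero, Matrix.cons_val_one,
    Matrix.head_cons, Matrix.head_fin_const, Matrix.cons_val_fin_one, Matrix.empty_val',
    Matrix.of_apply, Matrix.cons_val_two, Matrix.tail_cons]
  linear_combination
    ((A 0 0 + A 1 1 + A 2 2) *
        ((A 1 1 * A 2 2 - A 1 2 * A 2 1) + (A 0 0 * A 2 2 - A 0 2 * A 2 0)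
          + (A 0 0 * A 1 1 - A 0 1 * A 1 0))) * hB
    + ((B 0 0 + B 1 1 + B 2 2) *
        ((B 1 1 * B 2 2 - B 1 2 * B 2 1) + (B 0 0 * B 2 2 - B 0 2 * B 2 0)
          + (B 0 0 * B 1 1 - B 0 1 * B 1 0))) * hA
    - 3 * (A 0 0 * A 1 1 * A 2 2 - A 0 0 * A 1 2 * A 2 1 - A 0 1 * A 1 0 * A 2 2
        + A 0 1 * A 1 2 * A 2 0 + A 0 2 * A 1 0 * A 2 1 - A 0 2 * A 1 1 * A 2 0) * hB
    - 3 * hA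
end

section
/- Let Â, B̂, Ĉ be in SL(2,ℂ) with ĈB̂Â = I, and let A, B, C be the 3×3 block-diagonal matrices A = diag(Â, 1), B = diag(B̂, 1), C = diag(Ĉ, 1) in SL(3,ℂ) (the 2×2 block in the upper left and the scalar 1 in the lower right). Then σ₊(A,B,C) = σ₋(A,B,C) = 3 − tr(A) − tr(B) − tr(C). -/
open Matrix

/-- The block-diagonal embedding `M ↦ diag(M, 1)` of 2×2 matrices into 3×3 matrices. -/
def embed3 (M : Matrix (Fin 2) (Fin 2) ℂ) : Matrix (Fin 3) (Fin 3) ℂ :=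
  !![M 0 0, M 0 1, 0;
     M 1 0, M 1 1, 0;
     0, 0, 1]

lemma embed3_inv (M : Matrix (Fin 2) (Fin 2) ℂ) (hM : M.det = 1) :
    (embed3 M)⁻¹ = embed3 !![M 1 1, -M 0 1; -M 1 0, M 0 0] := by
  apply Matrix.inv_eq_right_inv
  have hd : M 0 0 * M 1 1 - M 0 1 * M 1 0 = 1 := by
    rw [← Matrix.det_fin_two, hM]
  ext i j
  fin_cases i <;> fin_cases j <;>
    simp [embed3, Matrix.mul_apply, Fin.sum_univ_three, Matrix.one_apply] <;>
    (first | ring1 | linear_combination hd)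

lemma embed3_trace (M : Matrix (Fin 2) (Fin 2) ℂ) :
    (embed3 M).trace = M 0 0 + M 1 1 + 1 := by
  simp [embed3, Matrix.trace_fin_three]

lemma embed3_mul (M N : Matrix (Fin 2) (Fin 2) ℂ) :
    embed3 M * embed3 N = embed3 (M * N) := by
  ext i j
  fin_cases i <;> fin_cases j <;>
    simp [embed3, Matrix.mul_apply, Fin.sum_univ_three, Fin.sum_univ_two]

theorem shape_invariants_of_reducible_block_diagonal
    (Ah Bh Ch : Matrix (Fin 2) (Fin 2) ℂ)
    (hA : Ah.det = 1) (hB : Bh.det = 1) (hC : Ch.det = 1)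
    (h : Ch * Bh * Ah = 1) :
    ((embed3 Ah)⁻¹ * embed3 Bh).trace - ((embed3 Ah)⁻¹).trace * (embed3 Bh).trace
      = ((embed3 Bh)⁻¹ * embed3 Ah).trace - ((embed3 Bh)⁻¹).trace * (embed3 Ah).trace ∧
    ((embed3 Ah)⁻¹ * embed3 Bh).trace - ((embed3 Ah)⁻¹).trace * (embed3 Bh).trace
      = 3 - (embed3 Ah).trace - (embed3 Bh).trace - (embed3 Ch).trace := by
  have hdA : Ah 0 0 * Ah 1 1 - Ah 0 1 * Ah 1 0 = 1 := by rw [← Matrix.det_fin_two, hA]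
  have hdB : Bh 0 0 * Bh 1 1 - Bh 0 1 * Bh 1 0 = 1 := by rw [← Matrix.det_fin_two, hB]
  have h1 : Ch * (Bh * Ah) = 1 := by rw [← mul_assoc]; exact h
  have hCh : Ch = (Bh * Ah)⁻¹ := (Matrix.inv_eq_left_inv h1).symm
  have hCh' : Ch = !![(Bh*Ah) 1 1, -(Bh*Ah) 0 1; -(Bh*Ah) 1 0, (Bh*Ah) 0 0] := by
    rw [hCh]
    apply Matrix.inv_eq_right_inv
    ext i j
    fin_cases i <;> fin_cases j <;>
      simp [Matrix.mul_apply, Fin.sum_univ_two, Matrix.one_apply] <;>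
      (first | ring1
             | linear_combination (Ah 0 0 * Ah 1 1 - Ah 0 1 * Ah 1 0) * hdB + hdA
             | linear_combination (Bh 0 0 * Bh 1 1 - Bh 0 1 * Bh 1 0) * hdA + hdB
             | linear_combination hdB * hdA
             | linear_combination hdA * hdB)
  rw [embed3_inv Ah hA, embed3_inv Bh hB, embed3_mul, embed3_mul]
  rw [embed3_trace, embed3_trace, embed3_trace, embed3_trace, embed3_trace, embed3_trace,
    embed3_trace]
  rw [hCh']
  constructor <;>
  · simp [Matrix.mul_apply, Fin.sum_univ_two]
    ring
end
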